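/- arXiv:2002.09393 — 2 statements merged into one kernel-verified Lean document; each statement's English description precedes it below -/
import Mathlib

section
/- If an equivalence relation ~ of finite index on finite words over an alphabet Σ satisfies: for all sequences of finite words (u_i) and (u_i') with u_i ~ u_i' for all i, the infinite concatenation u_1 u_2 ⋯ is in L iff u_1' u_2' ⋯ is in L, then there exists an equivalence relation ≈ of finite index that satisfies the same condition and is additionally a congruence for concatenation (u_1 ≈ u_1' and u_2 ≈ u_2' implies u_1 u_2 ≈ u_1' u_2'). -/
open Filter

variable {A : Type*}

/-- The interval coded by `p` occupies positions `p.1, …, p.1 + p.2 - 1` (length `p.2 > 0`). -/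
def IntervalLt (p q : ℕ × ℕ) : Prop := p.1 + p.2 ≤ q.1

def IntervalDisj (p q : ℕ × ℕ) : Prop := p.1 + p.2 ≤ q.1 ∨ q.1 + q.2 ≤ p.1

def prefixList (u : ℕ → List A) (m : ℕ) : List A := (List.range m).flatMap u

/-- Prepending a finite word to an ω-word. -/
def prepend (w : List A) (x : ℕ → A) : ℕ → A := fun n =>
  if h : n < w.length then w.get ⟨n, h⟩ else x (n - w.length)

open Classical in
/-- The infinite concatenation `u 0 · u 1 · u 2 ⋯` of a sequence of finite words, as an
ω-word; meaningful when infinitely many of the `u i` are nonempty. -/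
noncomputable def omegaConcat [Inhabited A] (u : ℕ → List A) : ℕ → A := fun n =>
  if h : ∃ m, n < (prefixList u m).length
  then (prefixList u (Nat.find h)).getD n default
  else default

/-- The ω-power `v^ω` of a finite word; meaningful when `v ≠ []`. -/
noncomputable def omegaPow [Inhabited A] (v : List A) : ℕ → A := fun n =>
  v.getD (n % v.length) default

/-- Infinitely many of the words `u i` are nonempty. -/
def InfOftenNonempty (u : ℕ → List A) : Prop := ∀ n, ∃ m, n ≤ m ∧ u m ≠ []

/-- A relation on finite words has finite index (finitely many classes). -/
def FiniteIndex (r : List A → List A → Prop) : Prop :=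
  (Set.range fun w => {v | r w v}).Finite

/-- Compatibility with concatenation. -/
def ConcatCongr (r : List A → List A → Prop) : Prop :=
  ∀ u₁ u₁' u₂ u₂' : List A, r u₁ u₁' → r u₂ u₂' → r (u₁ ++ u₂) (u₁' ++ u₂')

/-- The relation `r` recognizes `L`: relating the blocks of two infinite concatenations
pointwise preserves membership in `L`. -/
def Recognizes [Inhabited A] (r : List A → List A → Prop) (L : Set (ℕ → A)) : Prop :=
  ∀ u u' : ℕ → List A, InfOftenNonempty u → InfOftenNonempty u' →
    (∀ i, r (u i) (u' i)) → (omegaConcat u ∈ L ↔ omegaConcat u' ∈ L)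

/-- Nondeterministic Büchi automaton. -/
structure BuchiAutomaton (A : Type*) where
  Q : Type
  finQ : Finite Q
  init : Set Q
  step : Q → A → Set Q
  acc : Set Q

def BuchiAutomaton.Accepts (M : BuchiAutomaton A) (x : ℕ → A) : Prop :=
  ∃ ρ : ℕ → M.Q, ρ 0 ∈ M.init ∧ (∀ n, ρ (n + 1) ∈ M.step (ρ n) (x n)) ∧
    ∀ n, ∃ m, n ≤ m ∧ ρ m ∈ M.acc

def OmegaRegular (L : Set (ℕ → A)) : Prop :=
  ∃ M : BuchiAutomaton A, ∀ x, x ∈ L ↔ M.Accepts x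

/-- ω-words over `{a, b}` (with `a = true`, `b = false`) of the form `a^{k₁} b a^{k₂} b ⋯`
whose blocks of `a`'s have unbounded size. -/
def Uset : Set (ℕ → Bool) :=
  {x | (∀ n, ∃ m, n ≤ m ∧ x m = false) ∧ ∀ n, ∃ k, ∀ i < n, x (k + i) = true}

namespace OmegaAux
variable {A : Type*}
set_option linter.unusedSectionVars false

/-- Concatenation of blocks `u a, …, u (b-1)`. -/
def seg (u : ℕ → List A) (a b : ℕ) : List A := (List.range' a (b - a)).flatMap u

/-- Prepend one block to a sequence of blocks. -/
def consSeq (w : List A) (u : ℕ → List A) : ℕ → List A :=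
  fun n => match n with | 0 => w | n+1 => u n

lemma prefixList_succ (u : ℕ → List A) (m : ℕ) :
    prefixList u (m+1) = prefixList u m ++ u m := by
  simp [prefixList, List.range_succ]

lemma prefixList_prefix (u : ℕ → List A) {m k : ℕ} (h : m ≤ k) :
    prefixList u m <+: prefixList u k := by
  induction k with
  | zero => simp [Nat.le_zero.mp h]
  | succ k ih =>
    rcases Nat.lt_or_ge m (k+1) with h' | h'
    · exact (ih (Nat.lt_succ_iff.mp h')).trans (by rw [prefixList_succ]; exact ⟨u k, rfl⟩)
    · have : m = k+1 := le_antisymm h h'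
      subst this; exact List.prefix_refl _

lemma seg_zero (u : ℕ → List A) (a : ℕ) : seg u a a = [] := by simp [seg]

lemma seg_succ (u : ℕ → List A) {a b : ℕ} (h : a ≤ b) :
    seg u a (b+1) = seg u a b ++ u b := by
  have : b + 1 - a = (b - a) + 1 := by omega
  rw [seg, this, List.range'_concat]
  simp [seg]
  congr 2
  omega

lemma seg_single (u : ℕ → List A) (a : ℕ) : seg u a (a+1) = u a := by
  rw [seg_succ u (le_refl a), seg_zero]; simp

lemma seg_append (u : ℕ → List A) {a b c : ℕ} (hab : a ≤ b) (hbc : b ≤ c) :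
    seg u a b ++ seg u b c = seg u a c := by
  induction c with
  | zero =>
    have hb0 : b = 0 := Nat.le_zero.mp hbc
    have ha0 : a = 0 := by omega
    subst hb0; subst ha0; simp [seg_zero]
  | succ c ih =>
    rcases Nat.lt_or_ge b (c+1) with h' | h'
    · have hbc' : b ≤ c := Nat.lt_succ_iff.mp h'
      rw [seg_succ u hbc', seg_succ u (hab.trans hbc'), ← List.append_assoc, ih hbc']
    · have : b = c+1 := le_antisymm hbc h'
      subst this; simp [seg_zero]

lemma prefixList_eq_seg (u : ℕ → List A) (m : ℕ) : prefixList u m = seg u 0 m := by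
  simp [prefixList, seg, List.range_eq_range']

lemma seg_ne_nil (u : ℕ → List A) {a b m : ℕ} (ham : a ≤ m) (hmb : m < b) (hm : u m ≠ []) :
    seg u a b ≠ [] := by
  intro h
  rw [seg, List.flatMap_eq_nil_iff] at h
  exact hm (h m (by simp [List.mem_range']; exact ⟨m - a, by omega, by omega⟩))

section Omega
variable [Inhabited A]

lemma omegaConcat_eq {u : ℕ → List A} {n m : ℕ} (h : n < (prefixList u m).length) :
    omegaConcat u n = (prefixList u m).getD n default := by
  have hex : ∃ m, n < (prefixList u m).length := ⟨m, h⟩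
  rw [omegaConcat, dif_pos hex]
  have h1 : Nat.find hex ≤ m := Nat.find_le h
  have h2 : n < (prefixList u (Nat.find hex)).length := Nat.find_spec hex
  have hp := prefixList_prefix u h1
  rw [List.getD_eq_getElem _ _ h2, List.getD_eq_getElem _ _ h]
  exact List.IsPrefix.getElem hp h2

lemma omegaConcat_default {u : ℕ → List A} {n : ℕ}
    (h : ∀ m, (prefixList u m).length ≤ n) : omegaConcat u n = default := by
  rw [omegaConcat, dif_neg]
  push_neg
  exact h

lemma omega_ext {u v : ℕ → List A}
    (h1 : ∀ m, ∃ k, prefixList u m <+: prefixList v k)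
    (h2 : ∀ m, ∃ k, prefixList v m <+: prefixList u k) :
    omegaConcat u = omegaConcat v := by
  funext n
  by_cases hc : ∃ m, n < (prefixList u m).length
  · obtain ⟨m, hm⟩ := hc
    obtain ⟨k, hk⟩ := h1 m
    have hk' : n < (prefixList v k).length := lt_of_lt_of_le hm hk.length_le
    rw [omegaConcat_eq hm, omegaConcat_eq hk',
      List.getD_eq_getElem _ _ hm, List.getD_eq_getElem _ _ hk']
    exact List.IsPrefix.getElem hk hm
  · push_neg at hc
    have hcv : ∀ m, (prefixList v m).length ≤ n := by
      intro m
      obtain ⟨k, hk⟩ := h2 m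
      exact le_trans hk.length_le (hc k)
    rw [omegaConcat_default hc, omegaConcat_default hcv]

/-- grouping lemma : regrouping blocks does not change the infinite concatenation. -/
lemma omega_group (u : ℕ → List A) (φ : ℕ → ℕ) (h0 : φ 0 = 0)
    (hm : ∀ i, φ i ≤ φ (i+1)) (hub : ∀ n, ∃ m, n ≤ φ m) :
    omegaConcat (fun i => seg u (φ i) (φ (i+1))) = omegaConcat u := by
  have hmono : Monotone φ := monotone_nat_of_le_succ hm
  have key : ∀ m, prefixList (fun i => seg u (φ i) (φ (i+1))) m = prefixList u (φ m) := by
    intro m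
    induction m with
    | zero => simp [prefixList, h0]
    | succ m ih =>
      rw [prefixList_succ, ih, prefixList_eq_seg, prefixList_eq_seg]
      exact seg_append u (by omega) (hm m)
  apply omega_ext
  · intro m; exact ⟨φ m, by rw [key]⟩
  · intro m
    obtain ⟨k, hk⟩ := hub m
    exact ⟨k, by rw [key]; exact prefixList_prefix u hk⟩

end Omega
end OmegaAux
namespace OmegaAux
variable {A : Type*}
set_option linter.unusedSectionVars false

lemma prepend_nil (x : ℕ → A) : prepend [] x = x := by
  funext n; simp [prepend]

lemma prepend_append (a b : List A) (x : ℕ → A) :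
    prepend (a ++ b) x = prepend a (prepend b x) := by
  funext n
  simp only [prepend, List.length_append, List.get_eq_getElem]
  rcases Nat.lt_or_ge n a.length with h | h
  · rw [dif_pos (show n < a.length + b.length by omega), dif_pos h,
      List.getElem_append_left h]
  · rw [dif_neg (not_lt.2 h)]
    rcases Nat.lt_or_ge n (a.length + b.length) with h2 | h2
    · rw [dif_pos h2, dif_pos (show n - a.length < b.length by omega),
        List.getElem_append_right (not_lt.1 (not_lt.2 h))]
    · rw [dif_neg (not_lt.2 h2), dif_neg (show ¬ n - a.length < b.length by omega)]
      congr 1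
      omega

lemma prefixList_zero (u : ℕ → List A) : prefixList u 0 = [] := rfl

/-- the three-periodic sequence `y, w, z, y, w, z, …`. -/
def perSeq (y w z : List A) : ℕ → List A := fun n =>
  match n % 3 with | 0 => y | 1 => w | _ => z

lemma perSeq_eq0 (y w z : List A) {n : ℕ} (h : n % 3 = 0) : perSeq y w z n = y := by
  unfold perSeq; rw [h]; rfl

lemma perSeq_eq1 (y w z : List A) {n : ℕ} (h : n % 3 = 1) : perSeq y w z n = w := by
  unfold perSeq; rw [h]; rfl

lemma perSeq_eq2 (y w z : List A) {n : ℕ} (h : n % 3 = 2) : perSeq y w z n = z := by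
  unfold perSeq; rw [h]; rfl


section Omega
variable [Inhabited A]

lemma prefixList_consSeq (w : List A) (u : ℕ → List A) (m : ℕ) :
    prefixList (consSeq w u) (m+1) = w ++ prefixList u m := by
  induction m with
  | zero => rw [prefixList_succ]; simp [prefixList_zero]; rfl
  | succ m ih => rw [prefixList_succ, ih, prefixList_succ, List.append_assoc]; rfl

lemma omega_consSeq (w : List A) (u : ℕ → List A) :
    omegaConcat (consSeq w u) = prepend w (omegaConcat u) := by
  funext n
  rcases Nat.lt_or_ge n w.length with h | h
  · have h1 : n < (prefixList (consSeq w u) 1).length := by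
      rw [prefixList_consSeq, prefixList_zero, List.append_nil]; exact h
    rw [omegaConcat_eq h1, prepend, dif_pos h, prefixList_consSeq, prefixList_zero,
      List.append_nil, List.getD_eq_getElem _ _ h]
    rfl
  · have hpre : prepend w (omegaConcat u) n = omegaConcat u (n - w.length) := by
      rw [prepend, dif_neg (by omega)]
    rw [hpre]
    by_cases hc : ∃ m, n - w.length < (prefixList u m).length
    · obtain ⟨m, hm⟩ := hc
      have hlen : n < (w ++ prefixList u m).length := by
        simp only [List.length_append]; omega
      have h1 : n < (prefixList (consSeq w u) (m+1)).length := by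
        rw [prefixList_consSeq]; exact hlen
      rw [omegaConcat_eq h1, omegaConcat_eq hm, prefixList_consSeq,
        List.getD_eq_getElem _ _ hlen, List.getD_eq_getElem _ _ hm,
        List.getElem_append_right (by omega)]
    · push_neg at hc
      have hdef : ∀ m, (prefixList (consSeq w u) m).length ≤ n := by
        intro m
        cases m with
        | zero => simp [prefixList_zero]
        | succ m =>
          rw [prefixList_consSeq]
          have := hc m
          simp only [List.length_append]
          omega
      rw [omegaConcat_default hdef, omegaConcat_default hc]

lemma omega_perSeq_group (y w z : List A) :
    omegaConcat (perSeq y w z) = omegaConcat (fun _ => y ++ w ++ z) := by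
  have hseg : ∀ i : ℕ, seg (perSeq y w z) (3*i) (3*(i+1)) = y ++ w ++ z := by
    intro i
    have h3 : 3 * (i+1) = (3*i + 1) + 1 + 1 := by ring
    rw [h3, seg_succ _ (by omega), seg_succ _ (by omega), seg_single,
      perSeq_eq0 _ _ _ (by omega), perSeq_eq1 _ _ _ (by omega),
      perSeq_eq2 _ _ _ (by omega)]
  have hg := omega_group (perSeq y w z) (fun i => 3 * i) (by simp)
    (fun i => by show 3*i ≤ 3*(i+1); omega) (fun n => ⟨n, by show n ≤ 3*n; omega⟩)
  rw [← hg]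
  refine congrArg omegaConcat (funext fun i => ?_)
  show seg (perSeq y w z) (3*i) (3*(i+1)) = y ++ w ++ z
  exact hseg i

lemma const_eq_consSeq (v : List A) :
    (fun _ : ℕ => v) = consSeq v (fun _ => v) := by
  funext n; cases n <;> rfl

lemma omega_const_eq (v : List A) :
    omegaConcat (fun _ : ℕ => v) = prepend v (omegaConcat (fun _ => v)) := by
  conv_lhs => rw [const_eq_consSeq]
  rw [omega_consSeq]

end Omega

lemma infOften_consSeq_const (W e : List A) (he : e ≠ []) :
    InfOftenNonempty (consSeq W fun _ => e) := by
  intro n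
  exact ⟨n+1, by omega, he⟩

lemma infOften_consSeq_perSeq {y w z : List A} (h : y ++ w ++ z ≠ []) (x : List A) :
    InfOftenNonempty (consSeq x (perSeq y w z)) := by
  intro n
  have h3 : y ≠ [] ∨ w ≠ [] ∨ z ≠ [] := by
    by_contra hc; push_neg at hc; rw [hc.1, hc.2.1, hc.2.2] at h; simp at h
  rcases h3 with hy | hw | hz
  · refine ⟨3*n+1, by omega, ?_⟩
    show perSeq y w z (3*n) ≠ []
    rw [perSeq_eq0 _ _ _ (by omega)]; exact hy
  · refine ⟨3*n+2, by omega, ?_⟩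
    show perSeq y w z (3*n+1) ≠ []
    rw [perSeq_eq1 _ _ _ (by omega)]; exact hw
  · refine ⟨3*n+3, by omega, ?_⟩
    show perSeq y w z (3*n+2) ≠ []
    rw [perSeq_eq2 _ _ _ (by omega)]; exact hz

/-- grouping along unbounded cuts preserves `InfOftenNonempty`. -/
lemma infOften_group {u : ℕ → List A} (hu : InfOftenNonempty u)
    (φ : ℕ → ℕ) (h0 : φ 0 = 0) (hm : ∀ i, φ i ≤ φ (i+1)) (hub : ∀ n, ∃ m, n ≤ φ m) :
    InfOftenNonempty (fun i => seg u (φ i) (φ (i+1))) := by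
  intro N
  obtain ⟨m, hm1, hm2⟩ := hu (φ N)
  have hmono : Monotone φ := monotone_nat_of_le_succ hm
  classical
  have hex : ∃ i, m < φ (i+1) := by
    obtain ⟨k, hk⟩ := hub (m+1)
    exact ⟨k, lt_of_lt_of_le (by omega) (hmono (Nat.le_succ k))⟩
  obtain ⟨i, hi2, hi1⟩ : ∃ i, m < φ (i+1) ∧ φ i ≤ m := by
    refine ⟨Nat.find hex, Nat.find_spec hex, ?_⟩
    rcases hfi : Nat.find hex with _ | j
    · rw [h0]; omega
    · have hj := Nat.find_min hex (show j < Nat.find hex by omega)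
      push_neg at hj
      exact hj
  have hNi : N ≤ i := by
    by_contra hc
    push_neg at hc
    have : φ (i+1) ≤ φ N := hmono (by omega)
    omega
  exact ⟨i, hNi, seg_ne_nil u hi1 hi2 hm2⟩

end OmegaAux
namespace OmegaAux
open Filter

lemma ultrafilter_color {β : Type*} [Finite β] (U : Ultrafilter ℕ) (h : ℕ → β) :
    ∃ q, {j | h j = q} ∈ U := by
  by_contra hc
  push_neg at hc
  have hmem : ∀ q : β, {j | h j = q}ᶜ ∈ U :=
    fun q => Ultrafilter.compl_mem_iff_notMem.2 (hc q)
  have hint : (⋂ q : β, {j | h j = q}ᶜ) ∈ U := Filter.iInter_mem.2 hmem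
  have hempty : (⋂ q : β, {j | h j = q}ᶜ) = (∅ : Set ℕ) := by
    ext j; simp
  rw [hempty] at hint
  exact Filter.empty_notMem (U : Filter ℕ) hint

/-- Infinite Ramsey theorem for pairs : every finite colouring of pairs of naturals
admits an infinite monochromatic set. -/
lemma ramsey_pairs {β : Type*} [Finite β] (col : ℕ → ℕ → β) :
    ∃ (g : ℕ → ℕ) (q : β), StrictMono g ∧ ∀ i j, i < j → col (g i) (g j) = q := by
  classical
  let U : Ultrafilter ℕ := Filter.hyperfilter ℕ
  have hgt : ∀ a : ℕ, {j | a < j} ∈ U := by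
    intro a
    apply Filter.mem_hyperfilter_of_finite_compl
    have : {j | a < j}ᶜ = Set.Iic a := by ext j; simp [Set.mem_Iic]
    rw [this]
    exact Set.finite_Iic a
  have hcol : ∀ a : ℕ, ∃ q, {j | col a j = q} ∈ U := fun a => ultrafilter_color U (col a)
  choose qa hqa using hcol
  obtain ⟨q, hq⟩ := ultrafilter_color U qa
  set B : Set ℕ := {a | qa a = q} with hB
  let F : Set ℕ → Set ℕ := fun T => T ∩ {j | col (sInf T) j = q ∧ sInf T < j}
  let T : ℕ → Set ℕ := fun n => F^[n] B
  have hT0 : T 0 = B := rfl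
  have hTsucc : ∀ n, T (n+1) = F (T n) := by
    intro n
    show F^[n+1] B = F (F^[n] B)
    rw [Function.iterate_succ_apply']
  have hstep : ∀ S : Set ℕ, S ∈ U → S ⊆ B → F S ∈ U := by
    intro S hS hSsub
    have hSne : S.Nonempty := U.nonempty_of_mem hS
    have ha : sInf S ∈ S := Nat.sInf_mem hSne
    have h1 : {j | col (sInf S) j = q} ∈ U := by
      have h2 := hqa (sInf S)
      have h3 : qa (sInf S) = q := hSsub ha
      rw [h3] at h2
      exact h2
    exact Filter.inter_mem hS (by
      have : {j | col (sInf S) j = q ∧ sInf S < j}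
          = {j | col (sInf S) j = q} ∩ {j | sInf S < j} := rfl
      rw [this]
      exact Filter.inter_mem h1 (hgt _))
  have hFsub : ∀ S : Set ℕ, F S ⊆ S := fun S => Set.inter_subset_left
  have hinv : ∀ n, T n ∈ U ∧ T n ⊆ B := by
    intro n
    induction n with
    | zero => exact ⟨hq, le_refl _⟩
    | succ n ih =>
      rw [hTsucc]
      exact ⟨hstep _ ih.1 ih.2, (hFsub _).trans ih.2⟩
  set g : ℕ → ℕ := fun n => sInf (T n) with hg
  have hgmem : ∀ n, g n ∈ T n := fun n => Nat.sInf_mem (U.nonempty_of_mem (hinv n).1)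
  have hchain : ∀ i j, i ≤ j → T j ⊆ T i := by
    intro i j hij
    induction j with
    | zero => have : i = 0 := by omega
              subst this; exact le_refl _
    | succ j ih =>
      rcases Nat.lt_or_ge i (j+1) with h | h
      · exact (by rw [hTsucc]; exact hFsub (T j) : T (j+1) ⊆ T j).trans (ih (by omega))
      · have : i = j+1 := by omega
        subst this; exact le_refl _
  have hkey : ∀ i j, i < j → col (g i) (g j) = q ∧ g i < g j := by
    intro i j hij
    have : g j ∈ T (i+1) := hchain (i+1) j hij (hgmem j)
    rw [hTsucc] at this
    exact this.2
  refine ⟨g, q, strictMono_nat_of_lt_succ (fun n => (hkey n (n+1) (by omega)).2), ?_⟩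
  intro i j hij
  exact (hkey i j hij).1

end OmegaAux
namespace OmegaAux
section Main
variable {A : Type*} [Inhabited A]
set_option linter.unusedSectionVars false

variable (L : Set (ℕ → A)) (r : List A → List A → Prop)

/-- `r`-class of a word. -/
def cls (w : List A) : Set (List A) := {v | r w v}

lemma cls_eq_iff (hequiv : Equivalence r) {x y : List A} :
    cls r x = cls r y ↔ r x y := by
  constructor
  · intro h
    have : y ∈ cls r y := hequiv.refl y
    rw [← h] at this
    exact this
  · intro h
    ext v
    exact ⟨fun hv => hequiv.trans (hequiv.symm h) hv, fun hv => hequiv.trans h hv⟩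

/-- the sequence of blocks `x, w, y, z, z, z, …` -/
def s4 (x w y z : List A) : ℕ → List A := consSeq x (consSeq w (consSeq y (fun _ => z)))

/-- the sequence of blocks `x, y, w, z, y, w, z, …` -/
def sP (x y w z : List A) : ℕ → List A := consSeq x (perSeq y w z)

/-- first profile of a word : which ultimately periodic contexts (recorded by the `r`-classes
of their pieces) place it in `L`, the word sitting in the finite prefix. -/
def tau1 (u : List A) : Set (Set (List A) × Set (List A) × Set (List A)) :=
  {p | ∃ x y z : List A, cls r x = p.1 ∧ cls r y = p.2.1 ∧ cls r z = p.2.2 ∧ z ≠ [] ∧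
    omegaConcat (s4 x u y z) ∈ L}

/-- second profile : contexts where the word sits inside the periodic part. -/
def tau2 (u : List A) : Set (Set (List A) × Set (List A) × Set (List A)) :=
  {p | ∃ x y z : List A, cls r x = p.1 ∧ cls r y = p.2.1 ∧ cls r z = p.2.2 ∧
    y ++ u ++ z ≠ [] ∧ omegaConcat (sP x y u z) ∈ L}

/-- The refined relation : same emptiness, same profiles. -/
def R' (u v : List A) : Prop :=
  (u = [] ↔ v = []) ∧ tau1 L r u = tau1 L r v ∧ tau2 L r u = tau2 L r v

lemma R'_equiv : Equivalence (R' L r) := by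
  constructor
  · intro u; exact ⟨Iff.rfl, rfl, rfl⟩
  · intro u v ⟨h0, h1, h2⟩; exact ⟨h0.symm, h1.symm, h2.symm⟩
  · intro u v w ⟨h0, h1, h2⟩ ⟨g0, g1, g2⟩; exact ⟨h0.trans g0, h1.trans g1, h2.trans g2⟩

lemma omega_s4 (x w y z : List A) :
    omegaConcat (s4 x w y z) =
      prepend x (prepend w (prepend y (omegaConcat (fun _ => z)))) := by
  rw [s4, omega_consSeq, omega_consSeq, omega_consSeq]

lemma omega_sP (x y w z : List A) :
    omegaConcat (sP x y w z) = prepend x (omegaConcat (fun _ : ℕ => y ++ w ++ z)) := by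
  rw [sP, omega_consSeq, omega_perSeq_group]

lemma s4_rel (hequiv : Equivalence r) {x x' y y' z z' : List A} (w : List A)
    (hx : r x x') (hy : r y y') (hz : r z z') :
    ∀ i, r (s4 x w y z i) (s4 x' w y' z' i) := by
  intro i
  match i with
  | 0 => exact hx
  | 1 => exact hequiv.refl w
  | 2 => exact hy
  | (n+3) => exact hz

lemma sP_rel (hequiv : Equivalence r) {x x' y y' z z' : List A} (w : List A)
    (hx : r x x') (hy : r y y') (hz : r z z') :
    ∀ i, r (sP x y w z i) (sP x' y' w z' i) := by
  intro i
  match i with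
  | 0 => exact hx
  | (n+1) =>
    show r (perSeq y w z n) (perSeq y' w z' n)
    rcases h3 : n % 3 with _ | _ | k
    · rw [perSeq_eq0 _ _ _ h3, perSeq_eq0 _ _ _ h3]; exact hy
    · rw [perSeq_eq1 _ _ _ h3, perSeq_eq1 _ _ _ h3]; exact hequiv.refl w
    · have h2 : n % 3 = 2 := by omega
      rw [perSeq_eq2 _ _ _ h2, perSeq_eq2 _ _ _ h2]; exact hz

lemma infOften_s4 {z : List A} (hz : z ≠ []) (x w y : List A) :
    InfOftenNonempty (s4 x w y z) :=
  fun n => ⟨n+3, by omega, hz⟩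

lemma infOften_sP {y w z : List A} (h : y ++ w ++ z ≠ []) (x : List A) :
    InfOftenNonempty (sP x y w z) :=
  infOften_consSeq_perSeq h x

variable (hequiv : Equivalence r) (hrec : Recognizes r L)
include hequiv hrec

lemma inv1 (x y z w : List A) (hz : z ≠ []) :
    (cls r x, cls r y, cls r z) ∈ tau1 L r w ↔ omegaConcat (s4 x w y z) ∈ L := by
  constructor
  · rintro ⟨x', y', z', hx, hy, hz', hz'ne, hmem⟩
    have hiff := hrec (s4 x' w y' z') (s4 x w y z)
      (infOften_s4 hz'ne x' w y') (infOften_s4 hz x w y)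
      (s4_rel r hequiv w ((cls_eq_iff r hequiv).1 hx) ((cls_eq_iff r hequiv).1 hy)
        ((cls_eq_iff r hequiv).1 hz'))
    exact hiff.1 hmem
  · intro h
    exact ⟨x, y, z, rfl, rfl, rfl, hz, h⟩

lemma inv2 (x y z w : List A) (hne : y ++ w ++ z ≠ []) :
    (cls r x, cls r y, cls r z) ∈ tau2 L r w ↔ omegaConcat (sP x y w z) ∈ L := by
  constructor
  · rintro ⟨x', y', z', hx, hy, hz', hne', hmem⟩
    have hiff := hrec (sP x' y' w z') (sP x y w z)
      (infOften_sP hne' x') (infOften_sP hne x)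
      (sP_rel r hequiv w ((cls_eq_iff r hequiv).1 hx) ((cls_eq_iff r hequiv).1 hy)
        ((cls_eq_iff r hequiv).1 hz'))
    exact hiff.1 hmem
  · intro h
    exact ⟨x, y, z, rfl, rfl, rfl, hne, h⟩

lemma swap1 {w w' : List A} (h : tau1 L r w = tau1 L r w') {z : List A} (hz : z ≠ [])
    (x y : List A) :
    omegaConcat (s4 x w y z) ∈ L ↔ omegaConcat (s4 x w' y z) ∈ L := by
  rw [← inv1 L r hequiv hrec x y z w hz, h, inv1 L r hequiv hrec x y z w' hz]

lemma swap2 {w w' : List A} (h : tau2 L r w = tau2 L r w') {x y z : List A}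
    (h1 : y ++ w ++ z ≠ []) (h2 : y ++ w' ++ z ≠ []) :
    omegaConcat (sP x y w z) ∈ L ↔ omegaConcat (sP x y w' z) ∈ L := by
  rw [← inv2 L r hequiv hrec x y z w h1, h, inv2 L r hequiv hrec x y z w' h2]

lemma tau1_mono {u₁ u₁' u₂ u₂' : List A}
    (h1 : tau1 L r u₁ = tau1 L r u₁') (h2 : tau1 L r u₂ = tau1 L r u₂') :
    tau1 L r (u₁ ++ u₂) ⊆ tau1 L r (u₁' ++ u₂') := by
  rintro p ⟨x, y, z, hx, hy, hz, hzne, hmem⟩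
  have e1 : omegaConcat (s4 x (u₁ ++ u₂) y z) = omegaConcat (s4 (x ++ u₁) u₂ y z) := by
    rw [omega_s4, omega_s4, prepend_append, prepend_append]
  rw [e1] at hmem
  rw [swap1 L r hequiv hrec h2 hzne (x ++ u₁) y] at hmem
  have e2 : omegaConcat (s4 (x ++ u₁) u₂' y z) = omegaConcat (s4 x u₁ (u₂' ++ y) z) := by
    rw [omega_s4, omega_s4, prepend_append, prepend_append]
  rw [e2] at hmem
  rw [swap1 L r hequiv hrec h1 hzne x (u₂' ++ y)] at hmem
  have e3 : omegaConcat (s4 x u₁' (u₂' ++ y) z) = omegaConcat (s4 x (u₁' ++ u₂') y z) := by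
    rw [omega_s4, omega_s4, prepend_append, prepend_append]
  rw [e3] at hmem
  exact ⟨x, y, z, hx, hy, hz, hzne, hmem⟩

lemma tau2_mono {u₁ u₁' u₂ u₂' : List A}
    (he1 : u₁ = [] ↔ u₁' = []) (he2 : u₂ = [] ↔ u₂' = [])
    (h1 : tau2 L r u₁ = tau2 L r u₁') (h2 : tau2 L r u₂ = tau2 L r u₂') :
    tau2 L r (u₁ ++ u₂) ⊆ tau2 L r (u₁' ++ u₂') := by
  rintro p ⟨x, y, z, hx, hy, hz, hne, hmem⟩
  have ra : y ++ (u₁ ++ u₂) ++ z = (y ++ u₁) ++ u₂ ++ z := by simp [List.append_assoc]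
  have hA : (y ++ u₁) ++ u₂ ++ z ≠ [] := by rw [← ra]; exact hne
  have hB : (y ++ u₁) ++ u₂' ++ z ≠ [] := by
    simp only [ne_eq, List.append_eq_nil_iff] at hA ⊢; tauto
  have e1 : omegaConcat (sP x y (u₁ ++ u₂) z) = omegaConcat (sP x (y ++ u₁) u₂ z) := by
    rw [omega_sP, omega_sP, ra]
  rw [e1] at hmem
  rw [swap2 L r hequiv hrec h2 hA hB] at hmem
  have rb : (y ++ u₁) ++ u₂' ++ z = y ++ u₁ ++ (u₂' ++ z) := by simp [List.append_assoc]
  have hC : y ++ u₁ ++ (u₂' ++ z) ≠ [] := by rw [← rb]; exact hB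
  have hD : y ++ u₁' ++ (u₂' ++ z) ≠ [] := by
    simp only [ne_eq, List.append_eq_nil_iff] at hC ⊢; tauto
  have e2 : omegaConcat (sP x (y ++ u₁) u₂' z) = omegaConcat (sP x y u₁ (u₂' ++ z)) := by
    rw [omega_sP, omega_sP, rb]
  rw [e2] at hmem
  rw [swap2 L r hequiv hrec h1 hC hD] at hmem
  have rc : y ++ u₁' ++ (u₂' ++ z) = y ++ (u₁' ++ u₂') ++ z := by simp [List.append_assoc]
  have e3 : omegaConcat (sP x y u₁' (u₂' ++ z)) = omegaConcat (sP x y (u₁' ++ u₂') z) := by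
    rw [omega_sP, omega_sP, rc]
  rw [e3] at hmem
  have hfin : y ++ (u₁' ++ u₂') ++ z ≠ [] := by rw [← rc]; exact hD
  exact ⟨x, y, z, hx, hy, hz, hfin, hmem⟩

lemma R'_concatCongr : ConcatCongr (R' L r) := by
  rintro u₁ u₁' u₂ u₂' ⟨he1, h11, h12⟩ ⟨he2, h21, h22⟩
  refine ⟨?_, ?_, ?_⟩
  · simp only [List.append_eq_nil_iff]; tauto
  · exact Set.Subset.antisymm (tau1_mono L r hequiv hrec h11 h21)
      (tau1_mono L r hequiv hrec h11.symm h21.symm)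
  · exact Set.Subset.antisymm (tau2_mono L r hequiv hrec he1 he2 h12 h22)
      (tau2_mono L r hequiv hrec he1.symm he2.symm h12.symm h22.symm)

lemma R'_finiteIndex (hfin : FiniteIndex r) : FiniteIndex (R' L r) := by
  classical
  have hK : (Set.range (cls r)).Finite := hfin
  set K := Set.range (cls r) with hKdef
  have hK3 : (K ×ˢ (K ×ˢ K)).Finite := hK.prod (hK.prod hK)
  have hS : ({t | t ⊆ K ×ˢ (K ×ˢ K)} :
      Set (Set (Set (List A) × Set (List A) × Set (List A)))).Finite :=
    hK3.finite_subsets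
  have htau1 : ∀ u : List A, tau1 L r u ∈ {t | t ⊆ K ×ˢ (K ×ˢ K)} := by
    rintro u p ⟨x, y, z, hx, hy, hz, -, -⟩
    exact ⟨⟨x, hx⟩, ⟨y, hy⟩, ⟨z, hz⟩⟩
  have htau2 : ∀ u : List A, tau2 L r u ∈ {t | t ⊆ K ×ˢ (K ×ˢ K)} := by
    rintro u p ⟨x, y, z, hx, hy, hz, -, -⟩
    exact ⟨⟨x, hx⟩, ⟨y, hy⟩, ⟨z, hz⟩⟩
  set Φ : List A → Prop × Set (Set (List A) × Set (List A) × Set (List A))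
      × Set (Set (List A) × Set (List A) × Set (List A)) :=
    fun u => ((u = []), tau1 L r u, tau2 L r u) with hΦ
  have hrange : (Set.range Φ).Finite := by
    apply Set.Finite.subset (Set.Finite.prod (Set.finite_univ)
      (Set.Finite.prod hS hS))
    rintro t ⟨u, rfl⟩
    exact ⟨Set.mem_univ _, htau1 u, htau2 u⟩
  have hcomp : (fun w => {v | R' L r w v}) =
      (fun t : Prop × _ × _ => {v : List A | (t.1 ↔ v = []) ∧ t.2.1 = tau1 L r v ∧ t.2.2 = tau2 L r v}) ∘ Φ := by
    funext w
    rfl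
  rw [FiniteIndex, hcomp, Set.range_comp]
  exact (hrange.image _)

end Main
end OmegaAux
namespace OmegaAux
section Main2
variable {A : Type*} [Inhabited A]
set_option linter.unusedSectionVars false

variable (L : Set (ℕ → A)) (r : List A → List A → Prop)

lemma seg_of_le (u : ℕ → List A) {a b : ℕ} (h : b ≤ a) : seg u a b = [] := by
  simp [seg, Nat.sub_eq_zero_of_le h]

variable (hequiv : Equivalence r) (hrec : Recognizes r L)
include hequiv hrec

lemma R'_seg_congr {u u' : ℕ → List A} (h : ∀ i, R' L r (u i) (u' i)) (a : ℕ) :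
    ∀ b, R' L r (seg u a b) (seg u' a b) := by
  intro b
  induction b with
  | zero =>
    rw [seg_of_le u (by omega), seg_of_le u' (by omega)]
    exact (R'_equiv L r).refl []
  | succ b ih =>
    rcases Nat.lt_or_ge b a with hba | hab
    · rw [seg_of_le u (by omega), seg_of_le u' (by omega)]
      exact (R'_equiv L r).refl []
    · rw [seg_succ u hab, seg_succ u' hab]
      exact R'_concatCongr L r hequiv hrec _ _ _ _ ih (h b)

lemma R'_pow {e : List A} (hee : R' L r (e ++ e) e) {V : ℕ → List A} {a : ℕ}
    (h : ∀ i, a ≤ i → R' L r (V i) e) :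
    ∀ k, R' L r (seg V a (a + k + 1)) e := by
  intro k
  induction k with
  | zero => rw [show a + 0 + 1 = a + 1 from rfl, seg_single]; exact h a le_rfl
  | succ k ih =>
    have : a + (k+1) + 1 = (a + k + 1) + 1 := by omega
    rw [this, seg_succ V (by omega)]
    have hcat := R'_concatCongr L r hequiv hrec _ _ _ _ ih (h (a+k+1) (by omega))
    exact (R'_equiv L r).trans hcat hee

lemma merge_lemma (hfin : FiniteIndex r)
    (V : ℕ → List A) (W e : List A) (hV0 : R' L r (V 0) W) (hVi : ∀ i, R' L r (V (i+1)) e)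
    (he : e ≠ []) (hee : R' L r (e ++ e) e) (hio : InfOftenNonempty V) :
    (omegaConcat V ∈ L ↔ omegaConcat (consSeq W (fun _ => e)) ∈ L) := by
  classical
  have hK : (Set.range (cls r)).Finite := hfin
  have hKfin : Finite ↥(Set.range (cls r)) := hK.to_subtype
  obtain ⟨g, q, hgmono, hgcol⟩ := ramsey_pairs
    (fun i j => (⟨cls r (seg V i j), Set.mem_range_self _⟩ : ↥(Set.range (cls r))))
  set κ : ℕ → ℕ := fun i => g (i+2) with hκ
  have hκmono : StrictMono κ := fun a b h => hgmono (by omega)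
  have hκ0 : 2 ≤ κ 0 := le_trans (by omega) (hgmono.le_apply (x := 2))
  have hcolor : ∀ i j k l, i < j → k < l →
      r (seg V (κ i) (κ j)) (seg V (κ k) (κ l)) := by
    intro i j k l hij hkl
    have h1 := hgcol (i+2) (j+2) (by omega)
    have h2 := hgcol (k+2) (l+2) (by omega)
    have hval : cls r (seg V (κ i) (κ j)) = cls r (seg V (κ k) (κ l)) :=
      congrArg Subtype.val (h1.trans h2.symm)
    exact (cls_eq_iff r hequiv).1 hval
  set ψ : ℕ → ℕ := fun n => match n with | 0 => 0 | n+1 => κ n with hψ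
  have hψm : ∀ i, ψ i ≤ ψ (i+1) := by
    intro i
    match i with
    | 0 => show 0 ≤ κ 0; omega
    | i+1 => exact le_of_lt (hκmono (by omega))
  have hψub : ∀ n, ∃ m, n ≤ ψ m := by
    intro n
    refine ⟨n+1, ?_⟩
    show n ≤ κ n
    exact le_trans (by omega) (hgmono.le_apply (x := n+2))
  set G : ℕ → List A := fun i => seg V (ψ i) (ψ (i+1)) with hG
  have hωVG : omegaConcat G = omegaConcat V := omega_group V ψ rfl hψm hψub
  have hioG : InfOftenNonempty G := infOften_group hio ψ rfl hψm hψub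
  obtain ⟨i0, hi01, hi0ne⟩ := hioG 1
  set S' := G i0 with hS'
  have hrel : ∀ i, r (G i) (consSeq (G 0) (fun _ => S') i) := by
    intro i
    match i with
    | 0 => exact hequiv.refl _
    | i+1 =>
      show r (G (i+1)) S'
      obtain ⟨j, rfl⟩ : ∃ j, i0 = j + 1 := ⟨i0 - 1, by omega⟩
      exact hcolor i (i+1) j (j+1) (by omega) (by omega)
  have hioC : InfOftenNonempty (consSeq (G 0) fun _ => S') := infOften_consSeq_const _ _ hi0ne
  have step1 : omegaConcat V ∈ L ↔ omegaConcat (consSeq (G 0) fun _ => S') ∈ L := by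
    rw [← hωVG]; exact hrec G _ hioG hioC hrel
  -- `R'`-facts
  have hblocks : ∀ i, 1 ≤ i → R' L r (V i) e := by
    intro i hi
    obtain ⟨m, rfl⟩ : ∃ m, i = m + 1 := ⟨i - 1, by omega⟩
    exact hVi m
  have hS'e : R' L r S' e := by
    obtain ⟨j, rfl⟩ : ∃ j, i0 = j + 1 := ⟨i0 - 1, by omega⟩
    show R' L r (seg V (κ j) (κ (j+1))) e
    have h1 : (1:ℕ) ≤ κ j := le_trans (by omega) (le_trans hκ0 (hκmono.le_iff_le.2 (by omega) : κ 0 ≤ κ j))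
    obtain ⟨k, hk⟩ : ∃ k, κ (j+1) = κ j + k + 1 := ⟨κ (j+1) - κ j - 1, by
      have := hκmono (show j < j+1 by omega); omega⟩
    rw [hk]
    exact R'_pow L r hequiv hrec hee (fun i hi => hblocks i (by omega)) k
  have hG0 : R' L r (G 0) (W ++ e) := by
    show R' L r (seg V 0 (κ 0)) (W ++ e)
    have hsplit : seg V 0 (κ 0) = V 0 ++ seg V 1 (κ 0) := by
      rw [← seg_append V (show (0:ℕ) ≤ 1 by omega) (by omega), seg_single]
    rw [hsplit]
    obtain ⟨k, hk⟩ : ∃ k, κ 0 = 1 + k + 1 := ⟨κ 0 - 2, by omega⟩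
    refine R'_concatCongr L r hequiv hrec _ _ _ _ hV0 ?_
    rw [hk]
    exact R'_pow L r hequiv hrec hee (fun i hi => hblocks i hi) k
  -- swaps
  have w1 : omegaConcat (consSeq (G 0) fun _ => S') = omegaConcat (sP (G 0) [] S' []) := by
    rw [omega_consSeq, omega_sP]
    simp
  have step2 : omegaConcat (sP (G 0) [] S' []) ∈ L ↔ omegaConcat (sP (G 0) [] e []) ∈ L :=
    swap2 L r hequiv hrec hS'e.2.2 (by simpa using hi0ne) (by simpa using he)
  have w2 : omegaConcat (sP (G 0) [] e []) = omegaConcat (s4 [] (G 0) [] e) := by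
    rw [omega_sP, omega_s4, prepend_nil, prepend_nil]
    simp
  have step3 : omegaConcat (s4 [] (G 0) [] e) ∈ L ↔ omegaConcat (s4 [] (W ++ e) [] e) ∈ L :=
    swap1 L r hequiv hrec hG0.2.1 he [] []
  have w3 : omegaConcat (s4 [] (W ++ e) [] e) = omegaConcat (consSeq W (fun _ => e)) := by
    rw [omega_s4, omega_consSeq, prepend_nil, prepend_nil, prepend_append, ← omega_const_eq]
  rw [step1, w1, step2, w2, step3, w3]

lemma R'_recognizes (hfin : FiniteIndex r) : Recognizes (R' L r) L := by
  classical
  intro u u' hio hio' hrel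
  have hKfin : Finite ↥(Set.range fun w => {v | R' L r w v}) :=
    (R'_finiteIndex L r hequiv hrec hfin).to_subtype
  obtain ⟨g, q, hgmono, hgcol⟩ := ramsey_pairs
    (fun i j => (⟨{v | R' L r (seg u i j) v}, Set.mem_range_self _⟩ :
      ↥(Set.range fun w => {v | R' L r w v})))
  set e := seg u (g 0) (g 1) with hedef
  have hcolR : ∀ i j, i < j → R' L r (seg u (g i) (g j)) e := by
    intro i j hij
    have hval : {v | R' L r (seg u (g i) (g j)) v} = {v | R' L r e v} :=
      congrArg Subtype.val ((hgcol i j hij).trans (hgcol 0 1 (by omega)).symm)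
    have : e ∈ {v | R' L r e v} := (R'_equiv L r).refl e
    rw [← hval] at this
    exact this
  have hee : R' L r (e ++ e) e := by
    have h01 := hcolR 0 1 (by omega)
    have h12 := hcolR 1 2 (by omega)
    have h02 := hcolR 0 2 (by omega)
    have hcat := R'_concatCongr L r hequiv hrec _ _ _ _ h01 h12
    rw [seg_append u (le_of_lt (hgmono (by omega))) (le_of_lt (hgmono (by omega)))] at hcat
    exact (R'_equiv L r).trans ((R'_equiv L r).symm hcat) h02
  have hene : e ≠ [] := by
    intro h0
    obtain ⟨m, hm1, hm2⟩ := hio (g 0)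
    have hlt : m < g (m+1) := lt_of_lt_of_le (by omega) (hgmono.le_apply (x := m+1))
    have hseg := hcolR 0 (m+1) (by omega)
    have hnil : seg u (g 0) (g (m+1)) = [] := hseg.1.2 h0
    exact seg_ne_nil u hm1 hlt hm2 hnil
  set ψ : ℕ → ℕ := fun n => match n with | 0 => 0 | n+1 => g n with hψ
  have hψm : ∀ i, ψ i ≤ ψ (i+1) := by
    intro i
    match i with
    | 0 => show 0 ≤ g 0; omega
    | i+1 => exact le_of_lt (hgmono (by omega))
  have hψub : ∀ n, ∃ m, n ≤ ψ m := by
    intro n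
    exact ⟨n+1, hgmono.le_apply⟩
  set W := seg u 0 (g 0) with hW
  have hu : omegaConcat u ∈ L ↔ omegaConcat (consSeq W (fun _ => e)) ∈ L := by
    rw [← omega_group u ψ rfl hψm hψub]
    refine merge_lemma L r hequiv hrec hfin _ W e ((R'_equiv L r).refl _)
      (fun i => hcolR i (i+1) (by omega)) hene hee (infOften_group hio ψ rfl hψm hψub)
  have hu' : omegaConcat u' ∈ L ↔ omegaConcat (consSeq W (fun _ => e)) ∈ L := by
    rw [← omega_group u' ψ rfl hψm hψub]
    have hrel' : ∀ i, R' L r (u' i) (u i) := fun i => (R'_equiv L r).symm (hrel i)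
    refine merge_lemma L r hequiv hrec hfin _ W e ?_ ?_ hene hee
      (infOften_group hio' ψ rfl hψm hψub)
    · exact R'_seg_congr L r hequiv hrec hrel' 0 (g 0)
    · intro i
      exact (R'_equiv L r).trans (R'_seg_congr L r hequiv hrec hrel' (g i) (g (i+1)))
        (hcolR i (i+1) (by omega))
  rw [hu, hu']

end Main2
end OmegaAux
/-- If an equivalence relation of finite index recognizes `L`, then some equivalence
relation of finite index recognizes `L` and is moreover a congruence for concatenation. -/
theorem statement0 [Inhabited A] (L : Set (ℕ → A)) (r : List A → List A → Prop)
    (hequiv : Equivalence r) (hfin : FiniteIndex r) (hrec : Recognizes r L) :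
    ∃ r' : List A → List A → Prop,
      Equivalence r' ∧ FiniteIndex r' ∧ Recognizes r' L ∧ ConcatCongr r' := by
  exact ⟨OmegaAux.R' L r, OmegaAux.R'_equiv L r,
    OmegaAux.R'_finiteIndex L r hequiv hrec hfin,
    OmegaAux.R'_recognizes L r hequiv hrec hfin,
    OmegaAux.R'_concatCongr L r hequiv hrec⟩
end

section
/- Every ω-regular language L ⊆ Σ^ω admits an ω-congruence of finite index. -/
open Filter

variable {A : Type*}

set_option linter.unusedSectionVars false
section Aux
variable [Inhabited A]

def RunOn (M : BuchiAutomaton A) (p : M.Q) (w : List A) (f : ℕ → M.Q) : Prop :=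
  f 0 = p ∧ ∀ i < w.length, f (i + 1) ∈ M.step (f i) (w.getD i default)

def PathB (M : BuchiAutomaton A) (p : M.Q) (w : List A) (q : M.Q) : Prop :=
  ∃ f, RunOn M p w f ∧ f w.length = q

def PathAccB (M : BuchiAutomaton A) (p : M.Q) (w : List A) (q : M.Q) : Prop :=
  ∃ f, RunOn M p w f ∧ f w.length = q ∧ ∃ i ≤ w.length, f i ∈ M.acc

def relB (M : BuchiAutomaton A) (w v : List A) : Prop :=
  ∀ p q : M.Q, (PathB M p w q ↔ PathB M p v q) ∧ (PathAccB M p w q ↔ PathAccB M p v q)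

lemma run_split (M : BuchiAutomaton A) {p : M.Q} {w v : List A} {f : ℕ → M.Q}
    (hf : RunOn M p (w ++ v) f) :
    RunOn M p w f ∧ RunOn M (f w.length) v (fun i => f (w.length + i)) := by
  refine ⟨⟨hf.1, fun i hi => ?_⟩, ⟨rfl, fun i hi => ?_⟩⟩
  · have := hf.2 i (by rw [List.length_append]; omega)
    rwa [List.getD_append _ _ _ _ hi] at this
  · have := hf.2 (w.length + i) (by rw [List.length_append]; omega)
    rw [List.getD_append_right _ _ _ _ (Nat.le_add_right _ _)] at this
    simpa [Nat.add_sub_cancel_left, Nat.add_assoc] using this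

lemma run_glue (M : BuchiAutomaton A) {p s : M.Q} {w v : List A} {f1 f2 : ℕ → M.Q}
    (h1 : RunOn M p w f1) (e1 : f1 w.length = s) (h2 : RunOn M s v f2) :
    RunOn M p (w ++ v) (fun i => if i < w.length then f1 i else f2 (i - w.length)) ∧
    (∀ j ≤ w.length, (fun i => if i < w.length then f1 i else f2 (i - w.length)) j = f1 j) ∧
    (∀ j, (fun i => if i < w.length then f1 i else f2 (i - w.length)) (w.length + j) = f2 j) := by
  have hleft : ∀ j ≤ w.length,
      (fun i => if i < w.length then f1 i else f2 (i - w.length)) j = f1 j := by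
    intro j hj
    simp only
    split_ifs with hlt
    · rfl
    · have hj' : j = w.length := by omega
      rw [hj', Nat.sub_self, h2.1, ← e1]
  have hright : ∀ j,
      (fun i => if i < w.length then f1 i else f2 (i - w.length)) (w.length + j) = f2 j := by
    intro j
    simp only
    rw [if_neg (by omega), Nat.add_sub_cancel_left]
  refine ⟨⟨?_, ?_⟩, hleft, hright⟩
  · rw [hleft 0 (Nat.zero_le _), h1.1]
  · intro i hi
    rw [List.length_append] at hi
    by_cases hcs : i + 1 ≤ w.length
    · rw [List.getD_append _ _ _ _ (by omega), hleft i (by omega), hleft (i+1) hcs]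
      exact h1.2 i (by omega)
    · by_cases hcs2 : i < w.length
      · -- i + 1 = w.length + 0
        have hi1 : i + 1 = w.length + 0 := by omega
        rw [List.getD_append _ _ _ _ hcs2, hleft i (by omega), hi1, hright 0, h2.1, ← e1]
        have : w.length = i + 1 := by omega
        rw [this]
        exact h1.2 i (by omega)
      · have hwi : w.length ≤ i := by omega
        have e2 : i = w.length + (i - w.length) := by omega
        have e3 : i + 1 = w.length + (i - w.length + 1) := by omega
        have g1 := hright (i - w.length); rw [← e2] at g1
        have g2 := hright (i - w.length + 1); rw [← e3] at g2
        rw [List.getD_append_right _ _ _ _ hwi, g1, g2]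
        exact h2.2 (i - w.length) (by omega)


lemma pathB_append (M : BuchiAutomaton A) (p q : M.Q) (w v : List A) :
    PathB M p (w ++ v) q ↔ ∃ s, PathB M p w s ∧ PathB M s v q := by
  constructor
  · rintro ⟨f, hf, hq⟩
    obtain ⟨h1, h2⟩ := run_split M hf
    refine ⟨f w.length, ⟨f, h1, rfl⟩, ⟨_, h2, ?_⟩⟩
    show f (w.length + v.length) = q
    rw [← List.length_append]; exact hq
  · rintro ⟨s, ⟨f1, h1, e1⟩, ⟨f2, h2, e2⟩⟩
    obtain ⟨hrun, _, hright⟩ := run_glue M h1 e1 h2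
    refine ⟨_, hrun, ?_⟩
    rw [List.length_append]; exact (hright v.length).trans e2

lemma pathAccB_append (M : BuchiAutomaton A) (p q : M.Q) (w v : List A) :
    PathAccB M p (w ++ v) q ↔
      ∃ s, (PathAccB M p w s ∧ PathB M s v q) ∨ (PathB M p w s ∧ PathAccB M s v q) := by
  constructor
  · rintro ⟨f, hf, hq, i, hi, hia⟩
    obtain ⟨h1, h2⟩ := run_split M hf
    rw [List.length_append] at hi
    have hend : (fun i => f (w.length + i)) v.length = q := by
      show f (w.length + v.length) = q
      rw [← List.length_append]; exact hq
    by_cases hc : i ≤ w.length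
    · exact ⟨f w.length, Or.inl ⟨⟨f, h1, rfl, i, hc, hia⟩, ⟨_, h2, hend⟩⟩⟩
    · refine ⟨f w.length, Or.inr ⟨⟨f, h1, rfl⟩, ⟨_, h2, hend, i - w.length, by omega, ?_⟩⟩⟩
      show f (w.length + (i - w.length)) ∈ M.acc
      rw [Nat.add_sub_cancel' (by omega)]; exact hia
  · rintro ⟨s, ⟨⟨f1, h1, e1, i, hi, hia⟩, ⟨f2, h2, e2⟩⟩ | ⟨⟨f1, h1, e1⟩, ⟨f2, h2, e2, i, hi, hia⟩⟩⟩
    · obtain ⟨hrun, hleft, hright⟩ := run_glue M h1 e1 h2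
      refine ⟨_, hrun, ?_, i, ?_, ?_⟩
      · rw [List.length_append]; exact (hright v.length).trans e2
      · rw [List.length_append]; omega
      · show (fun i => if i < w.length then f1 i else f2 (i - w.length)) i ∈ M.acc
        rw [hleft i hi]; exact hia
    · obtain ⟨hrun, hleft, hright⟩ := run_glue M h1 e1 h2
      refine ⟨_, hrun, ?_, w.length + i, ?_, ?_⟩
      · rw [List.length_append]; exact (hright v.length).trans e2
      · rw [List.length_append]; omega
      · show (fun i => if i < w.length then f1 i else f2 (i - w.length)) (w.length + i) ∈ M.acc
        rw [hright i]; exact hia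

lemma relB_equivalence (M : BuchiAutomaton A) : Equivalence (relB M) :=
  ⟨fun _ _ _ => ⟨Iff.rfl, Iff.rfl⟩,
   fun h p q => ⟨(h p q).1.symm, (h p q).2.symm⟩,
   fun h1 h2 p q => ⟨(h1 p q).1.trans (h2 p q).1, (h1 p q).2.trans (h2 p q).2⟩⟩

lemma relB_concat (M : BuchiAutomaton A) {u₁ u₁' u₂ u₂' : List A}
    (h1 : relB M u₁ u₁') (h2 : relB M u₂ u₂') : relB M (u₁ ++ u₂) (u₁' ++ u₂') := by
  intro p q
  constructor
  · rw [pathB_append, pathB_append]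
    exact exists_congr fun s => and_congr ((h1 p s).1) ((h2 s q).1)
  · rw [pathAccB_append, pathAccB_append]
    exact exists_congr fun s => or_congr
      (and_congr ((h1 p s).2) ((h2 s q).1))
      (and_congr ((h1 p s).1) ((h2 s q).2))

lemma relB_finiteIndex (M : BuchiAutomaton A) :
    (Set.range fun w => {v | relB M w v}).Finite := by
  haveI := M.finQ
  set F : List A → (M.Q → M.Q → Prop × Prop) :=
    fun v p q => (PathB M p v q, PathAccB M p v q) with hF
  have key : ∀ w v, relB M w v ↔ F v = F w := by
    intro w v
    constructor
    · intro hrel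
      funext p q
      exact Prod.ext (propext (hrel p q).1.symm) (propext (hrel p q).2.symm)
    · intro heq p q
      have := congrFun (congrFun heq p) q
      rw [Prod.ext_iff] at this
      exact ⟨iff_of_eq this.1.symm, iff_of_eq this.2.symm⟩
  have hsub : (Set.range fun w => {v | relB M w v}) ⊆
      Set.range (fun c : (M.Q → M.Q → Prop × Prop) => {v | F v = c}) := by
    rintro S ⟨w, rfl⟩
    refine ⟨F w, ?_⟩
    ext v
    simp only [Set.mem_setOf_eq]
    exact (key w v).symm
  exact (Set.finite_range _).subset hsub


def NL (u : ℕ → List A) (m : ℕ) : ℕ := (prefixList u m).length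

lemma prefixList_succ (u : ℕ → List A) (m : ℕ) :
    prefixList u (m + 1) = prefixList u m ++ u m := by
  simp [prefixList, List.range_succ]

lemma NL_zero (u : ℕ → List A) : NL u 0 = 0 := by simp [NL, prefixList]

lemma NL_succ (u : ℕ → List A) (m : ℕ) : NL u (m + 1) = NL u m + (u m).length := by
  simp [NL, prefixList_succ]

lemma NL_mono (u : ℕ → List A) : Monotone (NL u) :=
  monotone_nat_of_le_succ fun m => by rw [NL_succ]; omega

lemma prefixList_prefix (u : ℕ → List A) {a b : ℕ} (h : a ≤ b) :
    prefixList u a <+: prefixList u b := by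
  induction h with
  | refl => exact List.prefix_refl _
  | step h ih => exact ih.trans ⟨_, (prefixList_succ u _).symm⟩

lemma getD_prefixList_eq (u : ℕ → List A) {a b n : ℕ} (hab : a ≤ b) (hn : n < NL u a) :
    (prefixList u a).getD n default = (prefixList u b).getD n default := by
  obtain ⟨t, ht⟩ := prefixList_prefix u hab
  rw [← ht]
  exact (List.getD_append _ _ _ _ hn).symm

lemma omegaConcat_apply (u : ℕ → List A) {n b : ℕ} (hb : n < NL u b) :
    omegaConcat u n = (prefixList u b).getD n default := by
  have h : ∃ m, n < (prefixList u m).length := ⟨b, hb⟩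
  rw [omegaConcat, dif_pos h]
  rcases le_total (Nat.find h) b with hle | hle
  · exact getD_prefixList_eq u hle (Nat.find_spec h)
  · exact (getD_prefixList_eq u hle hb).symm

lemma omegaConcat_block (u : ℕ → List A) {m i : ℕ} (hi : i < (u m).length) :
    omegaConcat u (NL u m + i) = (u m).getD i default := by
  have hb : NL u m + i < NL u (m + 1) := by rw [NL_succ]; omega
  have hnl : NL u m = (prefixList u m).length := rfl
  rw [omegaConcat_apply u hb, prefixList_succ, hnl,
    List.getD_append_right _ _ _ _ (Nat.le_add_right _ _), Nat.add_sub_cancel_left]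

lemma NL_unbounded {u : ℕ → List A} (hu : InfOftenNonempty u) : ∀ n, ∃ m, n < NL u m := by
  intro n
  induction n with
  | zero =>
    obtain ⟨m, _, hm⟩ := hu 0
    refine ⟨m + 1, ?_⟩
    rw [NL_succ]
    have := List.length_pos_iff.mpr hm
    omega
  | succ n ih =>
    obtain ⟨m, hm⟩ := ih
    obtain ⟨m', hmm', hne⟩ := hu m
    refine ⟨m' + 1, ?_⟩
    rw [NL_succ]
    have h1 : NL u m ≤ NL u m' := NL_mono u hmm'
    have := List.length_pos_iff.mpr hne
    omega


lemma accepts_transfer (M : BuchiAutomaton A) (u u' : ℕ → List A)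
    (hu : InfOftenNonempty u) (hu' : InfOftenNonempty u')
    (hr : ∀ i, relB M (u i) (u' i)) (hacc : M.Accepts (omegaConcat u)) :
    M.Accepts (omegaConcat u') := by
  classical
  obtain ⟨ρ, hinit, hstep, hfin⟩ := hacc
  set q : ℕ → M.Q := fun m => ρ (NL u m) with hq
  -- the run restricted to block m is a run on `u m` from `q m` to `q (m+1)`
  have hrun : ∀ m, RunOn M (q m) (u m) (fun i => ρ (NL u m + i)) := by
    intro m
    refine ⟨rfl, fun i hi => ?_⟩
    have hx := omegaConcat_block u hi
    have hs := hstep (NL u m + i)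
    rw [hx] at hs
    exact hs
  have hend : ∀ m, ρ (NL u m + (u m).length) = q (m + 1) := by
    intro m
    show _ = ρ (NL u (m + 1))
    rw [NL_succ]
  have hpath : ∀ m, PathB M (q m) (u m) (q (m + 1)) :=
    fun m => ⟨_, hrun m, hend m⟩
  -- infinitely many blocks contain an acceptance visit
  have haccu : ∀ k, ∃ m, k ≤ m ∧ PathAccB M (q m) (u m) (q (m + 1)) := by
    intro k
    obtain ⟨p, hpk, hpacc⟩ := hfin (NL u k)
    have hex : ∃ c, p < NL u c := NL_unbounded hu p
    set m := Nat.find hex - 1 with hm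
    have hfpos : 0 < Nat.find hex := by
      rcases Nat.eq_zero_or_pos (Nat.find hex) with h0 | h0
      · have := Nat.find_spec hex
        rw [h0, NL_zero] at this
        omega
      · exact h0
    have h2 : p < NL u (m + 1) := by
      rw [hm, Nat.sub_add_cancel hfpos]
      exact Nat.find_spec hex
    have h1 : NL u m ≤ p := by
      by_contra hcon
      push_neg at hcon
      exact Nat.find_min hex (by omega) hcon
    have hkm : k ≤ m := by
      by_contra hcon
      push_neg at hcon
      have := NL_mono u (show m + 1 ≤ k by omega)
      omega
    have hlen : p - NL u m < (u m).length := by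
      have := NL_succ u m; omega
    refine ⟨m, hkm, _, hrun m, hend m, p - NL u m, by omega, ?_⟩
    show ρ (NL u m + (p - NL u m)) ∈ M.acc
    rw [Nat.add_sub_cancel' h1]
    exact hpacc
  -- choose runs on the u' blocks
  have hgex : ∀ m, ∃ f, RunOn M (q m) (u' m) f ∧ f (u' m).length = q (m + 1) ∧
      (PathAccB M (q m) (u m) (q (m + 1)) → ∃ i ≤ (u' m).length, f i ∈ M.acc) := by
    intro m
    by_cases hc : PathAccB M (q m) (u m) (q (m + 1))
    · obtain ⟨f, h1, h2, h3⟩ := ((hr m (q m) (q (m + 1))).2).mp hc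
      exact ⟨f, h1, h2, fun _ => h3⟩
    · obtain ⟨f, h1, h2⟩ := ((hr m (q m) (q (m + 1))).1).mp (hpath m)
      exact ⟨f, h1, h2, fun hcc => absurd hcc hc⟩
  choose g hg1 hg2 hg3 using hgex
  -- empty blocks force equal boundary states
  have hqeq : ∀ k m, k ≤ m → NL u' m ≤ NL u' k → q k = q m := by
    intro k m hkm
    induction m, hkm using Nat.le_induction with
    | base => intro _; rfl
    | succ m hkm ih =>
      intro hle
      have h1 : NL u' k ≤ NL u' m := NL_mono u' hkm
      have h2 : NL u' m ≤ NL u' (m + 1) := NL_mono u' (by omega : m ≤ m + 1)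
      have hlen : (u' m).length = 0 := by
        have := NL_succ u' m; omega
      have he : q m = q (m + 1) := by
        rw [← hg2 m, hlen, (hg1 m).1]
      rw [ih (by omega), he]
  -- block decomposition of positions in the u' concatenation
  have hex' : ∀ n, ∃ m, n < NL u' (m + 1) := by
    intro n
    obtain ⟨m, hm⟩ := NL_unbounded hu' n
    exact ⟨m, lt_of_lt_of_le hm (NL_mono u' (by omega : m ≤ m + 1))⟩
  set B : ℕ → ℕ := fun n => Nat.find (hex' n) with hB
  have hB2 : ∀ n, n < NL u' (B n + 1) := fun n => Nat.find_spec (hex' n)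
  have hB1 : ∀ n, NL u' (B n) ≤ n := by
    intro n
    rcases Nat.eq_zero_or_pos (B n) with h0 | h0
    · rw [h0, NL_zero]; omega
    · have hmin := Nat.find_min (hex' n) (show B n - 1 < B n by omega)
      push_neg at hmin
      have : B n - 1 + 1 = B n := by omega
      rwa [this] at hmin
  have hBeq : ∀ m n, NL u' m ≤ n → n < NL u' (m + 1) → B n = m := by
    intro m n h1 h2
    have hle : B n ≤ m := Nat.find_min' (hex' n) h2
    have hge : m ≤ B n := by
      by_contra hc
      push_neg at hc
      have := NL_mono u' (show B n + 1 ≤ m by omega)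
      have := hB2 n
      omega
    omega
  set ρ' : ℕ → M.Q := fun n => g (B n) (n - NL u' (B n)) with hρ'
  have hbound : ∀ k, ρ' (NL u' k) = q k := by
    intro k
    have h1 := hB1 (NL u' k)
    have h2 := hB2 (NL u' k)
    have hk : k ≤ B (NL u' k) := by
      by_contra hc
      push_neg at hc
      have := NL_mono u' (show B (NL u' k) + 1 ≤ k by omega)
      omega
    have heq : NL u' (B (NL u' k)) = NL u' k := le_antisymm h1 (NL_mono u' hk)
    show g (B (NL u' k)) (NL u' k - NL u' (B (NL u' k))) = q k
    rw [heq, Nat.sub_self, (hg1 _).1]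
    exact (hqeq k _ hk (le_of_eq heq)).symm
  refine ⟨ρ', ?_, ?_, ?_⟩
  · have h0 := hbound 0
    rw [NL_zero] at h0
    rw [h0]
    show ρ (NL u 0) ∈ M.init
    rw [NL_zero]
    exact hinit
  · intro n
    have h1 := hB1 n
    have h2 := hB2 n
    have hlen : n - NL u' (B n) < (u' (B n)).length := by
      have := NL_succ u' (B n); omega
    have hx : omegaConcat u' n = (u' (B n)).getD (n - NL u' (B n)) default := by
      have := omegaConcat_block u' hlen
      rwa [Nat.add_sub_cancel' h1] at this
    have htr := (hg1 (B n)).2 (n - NL u' (B n)) hlen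
    have hρn : ρ' n = g (B n) (n - NL u' (B n)) := rfl
    by_cases hcase : n + 1 < NL u' (B n + 1)
    · have hBn1 : B (n + 1) = B n := hBeq (B n) (n + 1) (by omega) hcase
      have hρn1 : ρ' (n + 1) = g (B n) (n - NL u' (B n) + 1) := by
        show g (B (n + 1)) (n + 1 - NL u' (B (n + 1))) = _
        rw [hBn1]
        congr 1
        omega
      rw [hx, hρn, hρn1]
      exact htr
    · have hn1 : n + 1 = NL u' (B n + 1) := by omega
      have hρn1 : ρ' (n + 1) = q (B n + 1) := by rw [hn1]; exact hbound (B n + 1)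
      have hlast : (u' (B n)).length = n - NL u' (B n) + 1 := by
        have := NL_succ u' (B n); omega
      rw [hx, hρn, hρn1, ← hg2 (B n), hlast]
      exact htr
  · intro n
    obtain ⟨k, hk⟩ := NL_unbounded hu' n
    obtain ⟨m, hkm, hPA⟩ := haccu k
    have hkm' : NL u' k ≤ NL u' m := NL_mono u' hkm
    obtain ⟨i, hi, hiacc⟩ := hg3 m hPA
    rcases lt_or_eq_of_le hi with hlt | heq
    · refine ⟨NL u' m + i, by omega, ?_⟩
      have hB' : B (NL u' m + i) = m :=
        hBeq m _ (Nat.le_add_right _ _) (by have := NL_succ u' m; omega)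
      show g (B (NL u' m + i)) (NL u' m + i - NL u' (B (NL u' m + i))) ∈ M.acc
      rw [hB', Nat.add_sub_cancel_left]
      exact hiacc
    · refine ⟨NL u' (m + 1), ?_, ?_⟩
      · have := NL_mono u' (by omega : m ≤ m + 1); omega
      · rw [hbound (m + 1), ← hg2 m, ← heq]
        exact hiacc

end Aux

/-- Every ω-regular language admits a finite-index ω-congruence. -/
theorem statement3 [Inhabited A] (L : Set (ℕ → A)) (h : OmegaRegular L) :
    ∃ r : List A → List A → Prop,
      Equivalence r ∧ FiniteIndex r ∧ ConcatCongr r ∧ Recognizes r L := by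
  obtain ⟨M, hM⟩ := h
  refine ⟨relB M, relB_equivalence M, relB_finiteIndex M,
    fun u₁ u₁' u₂ u₂' h1 h2 => relB_concat M h1 h2, ?_⟩
  intro u u' hu hu' hr
  constructor
  · intro hmem
    exact (hM _).mpr (accepts_transfer M u u' hu hu' hr ((hM _).mp hmem))
  · intro hmem
    have hr' : ∀ i, relB M (u' i) (u i) := fun i => (relB_equivalence M).symm (hr i)
    exact (hM _).mpr (accepts_transfer M u' u hu' hu hr' ((hM _).mp hmem))
end
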